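/- arXiv:1502.06225 — 3 statements merged into one kernel-verified Lean document; each statement's English description precedes it below -/
import Mathlib

section
/- Let Γ ∈ ℝᴺ be Δ-admissible, let z̄ ∈ ∂_int F_NΩ, and let C be a cluster of P_{z̄} with z̄_C ∈ Ω. Then there exists δ > 0 such that for every z ∈ F_NΩ with |z − z̄| < δ one has |∇H_Ω(z)| ≥ (C_Γ/(4π)) · (Σ_{i∈C} |z_i − z̄_C|²)^{−1/2}. -/
open Complex Metric Set Filter Topology
open scoped BigOperators Classical ENNReal

noncomputable section

/-- The configuration space of `N` points, modelled as `ℂ^N` with the Euclidean (ℓ²) norm. -/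
abbrev Conf (N : ℕ) := PiLp 2 (fun _ : Fin N => ℂ)

/-- The configuration space `F_N Ω` of `N` distinct points in `Ω`. -/
def ConfigSp (N : ℕ) (Ω : Set ℂ) : Set (Conf N) :=
  {z | (∀ j, z j ∈ Ω) ∧ Function.Injective z}

/-- The Kirchhoff–Routh path function `H_Ω`. -/
def KRH {N : ℕ} (Γ : Fin N → ℝ) (g G : ℂ → ℂ → ℝ) (z : Conf N) : ℝ :=
  ∑ j, (Γ j)^2 * g (z j) (z j) +
    ∑ i, ∑ j, if i = j then 0 else Γ i * Γ j * G (z i) (z j)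

/-- The hypotheses on (hydrodynamic) Green's functions `G` with regular part `g`,
relative to the nearest-point projection `p` on the boundary strip `Ω_ε`. -/
structure GreenAssumptions (Ω : Set ℂ) (G g : ℂ → ℂ → ℝ) (p : ℂ → ℂ) (ε : ℝ) : Prop where
  εpos : 0 < ε
  lowerBdd : ∃ C₀ : ℝ, ∀ x ∈ Ω, ∀ y ∈ Ω, x ≠ y → C₀ ≤ G x y
  decomp : ∀ x ∈ Ω, ∀ y ∈ Ω, x ≠ y →
    G x y = g x y - (1 / (2 * Real.pi)) * Real.log (‖x - y‖)
  g_smooth : ContDiffOn ℝ 1 (fun q : ℂ × ℂ => g q.1 q.2) (Ω ×ˢ Ω)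
  g_upperBdd : ∃ C₁ : ℝ, ∀ x ∈ Ω, ∀ y ∈ Ω, g x y ≤ C₁
  G_C1_bound : ∀ ε' > (0:ℝ), ∃ C₂ : ℝ, ∀ x ∈ Ω, ∀ y ∈ Ω, ε' ≤ dist x y →
    |G x y| + ‖gradient (fun w => G w y) x‖ + ‖gradient (fun w => G x w) y‖ ≤ C₂
  proj_mem : ∀ z ∈ Ω, infDist z (frontier Ω) < ε → p z ∈ frontier Ω
  proj_dist : ∀ z ∈ Ω, infDist z (frontier Ω) < ε → dist z (p z) = infDist z (frontier Ω)
  refl_bound : ∃ C₃ : ℝ, ∀ x ∈ Ω, infDist x (frontier Ω) < ε →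
    ∀ y ∈ Ω, infDist y (frontier Ω) < ε →
    |g x y - (1 / (2 * Real.pi)) * Real.log (‖(2 • p x - x) - y‖)|
      + ‖gradient (fun w => g w y -
          (1 / (2 * Real.pi)) * Real.log (‖(2 • p w - w) - y‖)) x‖
      + ‖gradient (fun w => g x w -
          (1 / (2 * Real.pi)) * Real.log (‖(2 • p x - x) - w‖)) y‖ ≤ C₃
  line_bound : ∃ C₄ : ℝ, ∀ w v : ℂ, ‖v‖ = 1 → ∀ r s t : ℝ, r < s → s < t →
    w + (r : ℂ) * v ∈ Ω → w + (s : ℂ) * v ∈ Ω → w + (t : ℂ) * v ∈ Ω →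
    -C₄ ≤ G (w + (r : ℂ) * v) (w + (s : ℂ) * v) - G (w + (r : ℂ) * v) (w + (t : ℂ) * v)

/-- `Γ` is Δ-admissible. -/
def DeltaAdmissible {N : ℕ} (Γ : Fin N → ℝ) : Prop :=
  ∀ C : Finset (Fin N), 2 ≤ C.card →
    (∑ i ∈ C, ∑ j ∈ C, if i = j then 0 else Γ i * Γ j) ≠ 0

/-- `Γ` is ∂-admissible. -/
def PartialAdmissible {N : ℕ} (Γ : Fin N → ℝ) : Prop :=
  ∀ C : Finset (Fin N), 2 ≤ C.card →
    (∑ i ∈ C, ∑ j ∈ C, if i = j then 0 else |Γ i * Γ j|) < ∑ i ∈ C, (Γ i)^2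

/-- `Γ` is L-admissible with permutation `σ`: the numbers `t_j = η (−1)^j Γ_{σ⁻¹(j)}`
are positive and nondecreasing for some sign `η`. -/
def LAdmissibleWith {N : ℕ} (Γ : Fin N → ℝ) (σ : Equiv.Perm (Fin N)) : Prop :=
  ∃ η : ℝ, (η = 1 ∨ η = -1) ∧
    (∀ j : Fin N, 0 < η * (-1) ^ (j : ℕ) * Γ (σ.symm j)) ∧
    (∀ j k : Fin N, j ≤ k →
      η * (-1) ^ (j : ℕ) * Γ (σ.symm j) ≤ η * (-1) ^ (k : ℕ) * Γ (σ.symm k))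

/-- `Γ` is L-admissible. -/
def LAdmissible {N : ℕ} (Γ : Fin N → ℝ) : Prop :=
  ∃ σ : Equiv.Perm (Fin N), LAdmissibleWith Γ σ

/-- `φ` is a positive gradient flow of `H` on `ConfigSp N Ω` with (maximal) existence
times `tp`. -/
def IsGradFlow {N : ℕ} (Ω : Set ℂ) (H : Conf N → ℝ) (φ : Conf N → ℝ → Conf N)
    (tp : Conf N → ℝ≥0∞) : Prop :=
  ∀ z ∈ ConfigSp N Ω, (0 : ℝ≥0∞) < tp z ∧ φ z 0 = z ∧
    ∀ t : ℝ, 0 ≤ t → ENNReal.ofReal t < tp z →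
      φ z t ∈ ConfigSp N Ω ∧ HasDerivAt (φ z) (gradient H (φ z t)) t

/-- The flow `φ` is maximal: no solution of the gradient flow equation starting in
`ConfigSp N Ω` exists beyond time `tp z`. -/
def IsMaximalFlow {N : ℕ} (Ω : Set ℂ) (H : Conf N → ℝ) (tp : Conf N → ℝ≥0∞) : Prop :=
  ∀ z ∈ ConfigSp N Ω, ∀ (ψ : ℝ → Conf N) (T' : ℝ≥0∞), tp z < T' → ψ 0 = z →
    (∀ t : ℝ, 0 ≤ t → ENNReal.ofReal t < T' →
      ψ t ∈ ConfigSp N Ω ∧ HasDerivAt ψ (gradient H (ψ t)) t) → False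

/-- `C` is a cluster of the partition `P_z` determined by the tuple `z`: a maximal set of
at least two indices on which `z` is constant. -/
def IsCluster {N : ℕ} (z : Fin N → ℂ) (C : Finset (Fin N)) : Prop :=
  2 ≤ C.card ∧ (∀ i ∈ C, ∀ j ∈ C, z i = z j) ∧ ∀ k, k ∉ C → ∀ i ∈ C, z k ≠ z i

section auxStmt9

lemma logAbsDeriv (a : ℂ) (ha : a ≠ 0) :
    ∃ D : ℂ →L[ℝ] ℝ, HasFDerivAt (fun u : ℂ => Real.log (‖u‖)) D a ∧ D a = 1 := by
  have h0 : Complex.normSq a ≠ 0 := by simpa using ha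
  have hns : HasFDerivAt (fun u : ℂ => Complex.normSq u)
      (a.re • Complex.reCLM + a.re • Complex.reCLM + (a.im • Complex.imCLM + a.im • Complex.imCLM)) a := by
    have h1 : HasFDerivAt (fun u : ℂ => u.re * u.re + u.im * u.im)
        (a.re • Complex.reCLM + a.re • Complex.reCLM + (a.im • Complex.imCLM + a.im • Complex.imCLM)) a :=
      ((Complex.reCLM.hasFDerivAt.mul Complex.reCLM.hasFDerivAt).add
        (Complex.imCLM.hasFDerivAt.mul Complex.imCLM.hasFDerivAt))
    simpa [Complex.normSq_apply] using h1
  have hlog : HasFDerivAt (fun u : ℂ => Real.log (Complex.normSq u))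
      ((Complex.normSq a)⁻¹ • (a.re • Complex.reCLM + a.re • Complex.reCLM +
        (a.im • Complex.imCLM + a.im • Complex.imCLM))) a :=
    (Real.hasDerivAt_log h0).comp_hasFDerivAt a hns
  refine ⟨(2:ℝ)⁻¹ • ((Complex.normSq a)⁻¹ • (a.re • Complex.reCLM + a.re • Complex.reCLM +
    (a.im • Complex.imCLM + a.im • Complex.imCLM))), ?_, ?_⟩
  · have := hlog.const_smul (2:ℝ)⁻¹
    have heq : (fun u : ℂ => Real.log (‖u‖))
        = fun u : ℂ => (2:ℝ)⁻¹ • Real.log (Complex.normSq u) := by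
      funext u
      rw [Complex.norm_def, Real.log_sqrt (Complex.normSq_nonneg u)]
      simp [smul_eq_mul]; ring
    rw [heq]; exact this
  · simp only [ContinuousLinearMap.smul_apply, ContinuousLinearMap.add_apply,
      Complex.reCLM_apply, Complex.imCLM_apply, smul_eq_mul]
    rw [Complex.normSq_apply] at h0 ⊢
    have h0' : a.re ^ 2 + a.im ^ 2 ≠ 0 := by rw [sq, sq]; exact h0
    field_simp
    ring

lemma pairLogDeriv {x y : ℂ} (hxy : x ≠ y) :
    ∃ DL : ℂ × ℂ →L[ℝ] ℝ,
      HasFDerivAt (fun q : ℂ × ℂ => Real.log (‖q.1 - q.2‖)) DL (x, y) ∧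
      ∀ h : ℂ × ℂ, h.1 - h.2 = x - y → DL h = 1 := by
  have ha : x - y ≠ 0 := sub_ne_zero.2 hxy
  obtain ⟨D, hD, hD1⟩ := logAbsDeriv (x - y) ha
  have hsub : HasFDerivAt (fun q : ℂ × ℂ => q.1 - q.2)
      (ContinuousLinearMap.fst ℝ ℂ ℂ - ContinuousLinearMap.snd ℝ ℂ ℂ) (x, y) :=
    (hasFDerivAt_fst.sub hasFDerivAt_snd)
  refine ⟨D.comp (ContinuousLinearMap.fst ℝ ℂ ℂ - ContinuousLinearMap.snd ℝ ℂ ℂ),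
    (show HasFDerivAt ((fun u : ℂ => Real.log ‖u‖) ∘ fun q : ℂ × ℂ => q.1 - q.2) _ (x, y) from
      hD.comp (x, y) hsub), ?_⟩
  intro h hh
  simp only [ContinuousLinearMap.comp_apply, ContinuousLinearMap.sub_apply,
    ContinuousLinearMap.coe_fst', ContinuousLinearMap.coe_snd']
  rw [hh, hD1]

lemma gradInner {F : Type*} [NormedAddCommGroup F] [InnerProductSpace ℝ F] [CompleteSpace F]
    {f : F → ℝ} {D : F →L[ℝ] ℝ} {x : F} (hf : HasFDerivAt f D x) (u : F) :
    inner ℝ (gradient f x) u = D u := by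
  rw [hf.hasGradientAt.gradient]
  exact InnerProductSpace.toDual_symm_apply

lemma GDeriv {Ω : Set ℂ} (hΩo : IsOpen Ω) {G g : ℂ → ℂ → ℝ}
    (hdec : ∀ x ∈ Ω, ∀ y ∈ Ω, x ≠ y →
      G x y = g x y - (1 / (2 * Real.pi)) * Real.log (‖x - y‖))
    (hg : ContDiffOn ℝ 1 (fun q : ℂ × ℂ => g q.1 q.2) (Ω ×ˢ Ω))
    {x y : ℂ} (hx : x ∈ Ω) (hy : y ∈ Ω) (hxy : x ≠ y) :
    ∃ DG : ℂ × ℂ →L[ℝ] ℝ, HasFDerivAt (fun q : ℂ × ℂ => G q.1 q.2) DG (x, y) ∧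
      ∀ h : ℂ × ℂ, h.1 - h.2 = x - y →
        DG h = fderiv ℝ (fun q : ℂ × ℂ => g q.1 q.2) (x, y) h - 1 / (2 * Real.pi) := by
  obtain ⟨DL, hDL, hDL1⟩ := pairLogDeriv hxy
  have hopen : IsOpen ((Ω ×ˢ Ω) ∩ {q : ℂ × ℂ | q.1 ≠ q.2}) := by
    refine (hΩo.prod hΩo).inter ?_
    have : {q : ℂ × ℂ | q.1 ≠ q.2} = (fun q : ℂ × ℂ => q.1 - q.2) ⁻¹' {0}ᶜ := by
      ext q; simp [sub_eq_zero]
    rw [this]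
    exact (continuous_fst.sub continuous_snd).isOpen_preimage _ isOpen_compl_singleton
  have hmem : (x, y) ∈ (Ω ×ˢ Ω) ∩ {q : ℂ × ℂ | q.1 ≠ q.2} := ⟨⟨hx, hy⟩, hxy⟩
  have hgd : HasFDerivAt (fun q : ℂ × ℂ => g q.1 q.2)
      (fderiv ℝ (fun q : ℂ × ℂ => g q.1 q.2) (x, y)) (x, y) :=
    ((hg.differentiableOn one_ne_zero).differentiableAt
      ((hΩo.prod hΩo).mem_nhds ⟨hx, hy⟩)).hasFDerivAt
  have hGg : HasFDerivAt (fun q : ℂ × ℂ => G q.1 q.2)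
      (fderiv ℝ (fun q : ℂ × ℂ => g q.1 q.2) (x, y) - (1 / (2 * Real.pi)) • DL) (x, y) := by
    have h2 : HasFDerivAt
        (fun q : ℂ × ℂ => g q.1 q.2 - (1 / (2 * Real.pi)) * Real.log (‖q.1 - q.2‖))
        (fderiv ℝ (fun q : ℂ × ℂ => g q.1 q.2) (x, y) - (1 / (2 * Real.pi)) • DL) (x, y) :=
      hgd.sub (hDL.const_smul (1 / (2 * Real.pi)))
    refine h2.congr_of_eventuallyEq ?_
    filter_upwards [hopen.mem_nhds hmem] with q hq
    exact hdec q.1 hq.1.1 q.2 hq.1.2 hq.2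
  refine ⟨_, hGg, ?_⟩
  intro h hh
  simp [hDL1 h hh, smul_eq_mul]

end auxStmt9

set_option maxHeartbeats 2000000 in
/-- Lemma (interior collisions): near an interior collision point `z̄` with interior
cluster `C`, `|∇H_Ω(z)| ≥ (C_Γ/(4π)) (Σ_{i∈C} |z_i − z̄_C|²)^{−1/2}`. -/
theorem stmt_9 {N : ℕ} (Ω : Set ℂ)
    (hΩo : IsOpen Ω) (hΩc : IsConnected Ω) (hΩb : Bornology.IsBounded Ω)
    (G g : ℂ → ℂ → ℝ) (p : ℂ → ℂ) (ε : ℝ) (hG : GreenAssumptions Ω G g p ε)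
    (Γ : Fin N → ℝ) (hdadm : DeltaAdmissible Γ)
    (CΓ : ℝ)
    (hCΓ : ∀ C : Finset (Fin N), 2 ≤ C.card →
      CΓ ≤ |∑ i ∈ C, ∑ j ∈ C, if i = j then 0 else Γ i * Γ j|)
    (zb : Conf N) (hzb : ∀ j, zb j ∈ closure Ω)
    (C : Finset (Fin N)) (hC : IsCluster zb C)
    (i₀ : Fin N) (hi₀ : i₀ ∈ C) (hint : zb i₀ ∈ Ω) :
    ∃ δ > (0:ℝ), ∀ z ∈ ConfigSp N Ω, dist z zb < δ →
      CΓ / (4 * Real.pi) / Real.sqrt (∑ i ∈ C, (‖z i - zb i₀‖) ^ 2) ≤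
        ‖gradient (KRH Γ g G) z‖ := by
  rcases le_or_gt CΓ 0 with hCneg | hCpos
  · refine ⟨1, one_pos, fun z _ _ => ?_⟩
    refine le_trans (div_nonpos_of_nonpos_of_nonneg
      (div_nonpos_of_nonpos_of_nonneg hCneg (by positivity)) (Real.sqrt_nonneg _))
      (norm_nonneg _)
  -- notation
  set b := zb i₀ with hbdef
  have hb : b ∈ Ω := hint
  have hzbC : ∀ i ∈ C, zb i = b := fun i hi => hC.2.1 i hi i₀ hi₀
  set g2 : ℂ × ℂ → ℝ := fun q => g q.1 q.2 with hg2def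
  -- Lipschitz bound for g2 near (b,b)
  have hgat : ContDiffAt ℝ 1 g2 (b, b) :=
    hG.g_smooth.contDiffAt ((hΩo.prod hΩo).mem_nhds ⟨hb, hb⟩)
  obtain ⟨K₁, t, ht, hlip⟩ := hgat.exists_lipschitzOnWith
  obtain ⟨r, hrpos, hrt⟩ : ∃ r > 0, Metric.ball (b, b) r ⊆ t ∩ (Ω ×ˢ Ω) := by
    rcases Metric.mem_nhds_iff.1 (Filter.inter_mem ht
      ((hΩo.prod hΩo).mem_nhds (Set.mk_mem_prod hb hb))) with ⟨r, hr, hsub⟩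
    exact ⟨r, hr, hsub⟩
  have hgdiff : ∀ q : ℂ × ℂ, q ∈ Ω ×ˢ Ω → HasFDerivAt g2 (fderiv ℝ g2 q) q := fun q hq =>
    ((hG.g_smooth.differentiableOn one_ne_zero).differentiableAt
      ((hΩo.prod hΩo).mem_nhds hq)).hasFDerivAt
  have hgball : ∀ q : ℂ × ℂ, q ∈ Metric.ball (b, b) (r/2) → ‖fderiv ℝ g2 q‖ ≤ K₁ := by
    intro q hq
    have hqr : q ∈ Metric.ball (b, b) r := Metric.ball_subset_ball (by linarith) hq
    have hqΩ : q ∈ Ω ×ˢ Ω := (hrt hqr).2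
    refine (hgdiff q hqΩ).le_of_lipschitzOn (s := Metric.ball q (r/2))
      (Metric.ball_mem_nhds q (by linarith)) (hlip.mono ?_)
    intro w hw
    have hwb : w ∈ Metric.ball (b, b) r := by
      rw [Metric.mem_ball] at hw hq ⊢
      calc dist w (b, b) ≤ dist w q + dist q (b, b) := dist_triangle _ _ _
        _ < r/2 + r/2 := by linarith
        _ = r := by ring
    exact (hrt hwb).1
  -- separation of the other points
  obtain ⟨d₀, hd₀pos, hd₀⟩ : ∃ d₀ > 0, ∀ k, k ∉ C → d₀ ≤ ‖zb k - b‖ := by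
    have hpos : ∀ k, k ∉ C → 0 < ‖zb k - b‖ := by
      intro k hk
      have hne : zb k ≠ b := hC.2.2 k hk i₀ hi₀
      simpa [sub_eq_zero] using hne
    set S : Finset (Fin N) := Finset.univ.filter (fun k => k ∉ C) with hSdef
    rcases S.eq_empty_or_nonempty with hS | hS
    · refine ⟨1, one_pos, fun k hk => absurd ?_ (Finset.notMem_empty k)⟩
      rw [← hS]
      simp [hSdef, hk]
    · obtain ⟨k₀, hk₀S, hk₀min⟩ := S.exists_min_image (fun k => ‖zb k - b‖) hS
      have hk₀ : k₀ ∉ C := by simpa [hSdef] using hk₀S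
      refine ⟨‖zb k₀ - b‖, hpos k₀ hk₀, fun k hk => ?_⟩
      exact hk₀min k (by simp [hSdef, hk])
  obtain ⟨C₂, hC₂⟩ := hG.G_C1_bound (d₀/2) (by positivity)
  set C₂' := max C₂ 0 with hC₂'def
  have hC₂'nn : 0 ≤ C₂' := le_max_right _ _
  have hC₂le : C₂ ≤ C₂' := le_max_left _ _
  set K : ℝ := (∑ j, (Γ j)^2) * (2*(K₁:ℝ)) + (∑ i, ∑ j, |Γ i| * |Γ j|) * ((K₁:ℝ) + C₂') + 1
    with hKdef
  have hKpos : (0:ℝ) < K := by positivity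
  have hNpos : (0:ℝ) < N := by
    have h2 : 2 ≤ C.card := hC.1
    have : C.card ≤ N := by simpa using Finset.card_le_card (Finset.subset_univ C)
    have : 2 ≤ N := le_trans h2 this
    exact_mod_cast Nat.lt_of_lt_of_le Nat.zero_lt_two this
  set δ : ℝ := min (min (r/4) (d₀/4)) (CΓ / (4*Real.pi) / (K * N)) with hδdef
  have hδpos : 0 < δ := by
    refine lt_min (lt_min (by linarith) (by linarith)) ?_
    have : 0 < CΓ / (4*Real.pi) := by positivity
    positivity
  have hδr : δ ≤ r/4 := le_trans (min_le_left _ _) (min_le_left _ _)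
  have hδd : δ ≤ d₀/4 := le_trans (min_le_left _ _) (min_le_right _ _)
  have hδK : δ ≤ CΓ / (4*Real.pi) / (K * N) := min_le_right _ _
  refine ⟨δ, hδpos, fun z hz hdist => ?_⟩
  obtain ⟨hzΩ, hzinj⟩ := hz
  -- coordinatewise distance control
  have hcoord : ∀ i : Fin N, dist (z i) (zb i) ≤ dist z zb := by
    intro i
    rw [EuclideanSpace.dist_eq]
    rw [show dist (z i) (zb i) = Real.sqrt (dist (z i) (zb i)^2) from
      (Real.sqrt_sq dist_nonneg).symm]
    exact Real.sqrt_le_sqrt (Finset.single_le_sum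
      (fun j (_ : j ∈ Finset.univ) => sq_nonneg (dist (z j) (zb j))) (Finset.mem_univ i))
  have hcb : ∀ i ∈ C, dist (z i) b < δ := by
    intro i hi
    have := lt_of_le_of_lt (hcoord i) hdist
    rwa [hzbC i hi] at this
  -- ρ
  set ρ : ℝ := Real.sqrt (∑ i ∈ C, (‖z i - b‖) ^ 2) with hρdef
  have habs_dist : ∀ i : Fin N, ‖z i - b‖ = dist (z i) b := fun i =>
    (Complex.dist_eq (z i) b).symm
  have hρpos : 0 < ρ := by
    obtain ⟨i₁, hi₁C, hi₁ne⟩ := Finset.exists_mem_ne (Nat.lt_of_lt_of_le Nat.one_lt_two hC.1) i₀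
    have hzne : z i₁ ≠ z i₀ := fun he => hi₁ne (hzinj he)
    have hkey : ∃ i ∈ C, 0 < ‖z i - b‖ ^ 2 := by
      rcases eq_or_ne (z i₀) b with he | hne
      · refine ⟨i₁, hi₁C, ?_⟩
        have h0 : z i₁ - b ≠ 0 := by rw [← he]; exact sub_ne_zero.2 hzne
        exact pow_pos (norm_pos_iff.2 h0) 2
      · refine ⟨i₀, hi₀, ?_⟩
        have h0 : z i₀ - b ≠ 0 := sub_ne_zero.2 hne
        exact pow_pos (norm_pos_iff.2 h0) 2
    obtain ⟨i, hiC, hipos⟩ := hkey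
    exact Real.sqrt_pos.2 (Finset.sum_pos' (fun j _ => by positivity) ⟨i, hiC, hipos⟩)
  have hρδ : ρ ≤ N * δ := by
    have hsum : (∑ i ∈ C, (‖z i - b‖) ^ 2) ≤ (N * δ)^2 := by
      have hle : ∀ i ∈ C, (‖z i - b‖) ^ 2 ≤ δ^2 := by
        intro i hi
        have h1 : ‖z i - b‖ ≤ δ := by
          rw [habs_dist i]; exact le_of_lt (hcb i hi)
        exact pow_le_pow_left₀ (norm_nonneg _) h1 2
      calc (∑ i ∈ C, (‖z i - b‖) ^ 2) ≤ ∑ _i ∈ C, δ^2 :=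
            Finset.sum_le_sum hle
        _ = C.card * δ^2 := by rw [Finset.sum_const]; ring
        _ ≤ N * δ^2 := by
            have hcard : C.card ≤ N := by
              simpa using Finset.card_le_card (Finset.subset_univ C)
            have hcard' : (C.card : ℝ) ≤ N := by exact_mod_cast hcard
            nlinarith [sq_nonneg δ, hcard']
        _ ≤ (N * δ)^2 := by
            have hN1 : (1:ℝ) ≤ N := by
              have h2 : 2 ≤ C.card := hC.1
              have hcard : C.card ≤ N := by
                simpa using Finset.card_le_card (Finset.subset_univ C)
              have : 1 ≤ N := by omega
              exact_mod_cast this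
            nlinarith [sq_nonneg δ, mul_nonneg (sub_nonneg.2 hN1) (sq_nonneg δ), hNpos.le]
    calc ρ ≤ Real.sqrt ((N * δ)^2) := Real.sqrt_le_sqrt hsum
      _ = N * δ := Real.sqrt_sq (by positivity)
  -- the test vector
  set v : Conf N := WithLp.toLp 2 (fun i => if i ∈ C then z i - b else 0 : Fin N → ℂ) with hvdef
  have hvC : ∀ i ∈ C, v i = z i - b := fun i hi => if_pos hi
  have hvnC : ∀ i, i ∉ C → v i = 0 := fun i hi => if_neg hi
  have hvnorm : ‖v‖ = ρ := by
    rw [EuclideanSpace.norm_eq, hρdef]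
    congr 1
    have hterm : ∀ i : Fin N, ‖v i‖ ^ 2 =
        if i ∈ C then (‖z i - b‖) ^ 2 else 0 := by
      intro i
      by_cases hi : i ∈ C
      · rw [hvC i hi, if_pos hi]
      · rw [hvnC i hi, if_neg hi]; simp
    rw [Finset.sum_congr rfl (fun i _ => hterm i)]
    rw [Finset.sum_ite_mem, Finset.univ_inter]
  have hvle : ∀ i : Fin N, ‖v i‖ ≤ ρ := by
    intro i
    by_cases hi : i ∈ C
    · rw [hvC i hi,
        show ‖z i - b‖ = Real.sqrt ((‖z i - b‖)^2) from
          (Real.sqrt_sq (norm_nonneg _)).symm]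
      exact Real.sqrt_le_sqrt (Finset.single_le_sum
        (fun j (_ : j ∈ C) => sq_nonneg (‖z j - b‖)) hi)
    · rw [hvnC i hi]; simpa using hρpos.le
  -- membership of pairs in the good ball
  have hpairball : ∀ i ∈ C, ∀ j ∈ C, (z i, z j) ∈ Metric.ball (b, b) (r/2) := by
    intro i hi j hj
    rw [Metric.mem_ball, Prod.dist_eq]
    refine max_lt ?_ ?_ <;>
      [exact lt_of_lt_of_le (hcb i hi) (by linarith); exact lt_of_lt_of_le (hcb j hj) (by linarith)]
  -- separation between cluster and non-cluster points
  have hsep : ∀ i ∈ C, ∀ j, j ∉ C → d₀/2 ≤ dist (z i) (z j) := by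
    intro i hi j hj
    have h1 : d₀ ≤ dist (zb j) b := by rw [Complex.dist_eq]; exact hd₀ j hj
    have h2 : dist (z j) (zb j) < δ := lt_of_le_of_lt (hcoord j) hdist
    have h3 : dist (z i) b < δ := hcb i hi
    have h4 : dist (zb j) b ≤ dist (zb j) (z j) + dist (z j) (z i) + dist (z i) b :=
      dist_triangle4 _ _ _ _
    rw [dist_comm (zb j) (z j)] at h4
    rw [dist_comm (z i) (z j)]
    linarith
  -- derivatives of the G-terms
  have hpairD : ∀ i j : Fin N, ∃ DGij : ℂ × ℂ →L[ℝ] ℝ, i ≠ j →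
      HasFDerivAt (fun q : ℂ × ℂ => G q.1 q.2) DGij (z i, z j) ∧
      ∀ h : ℂ × ℂ, h.1 - h.2 = z i - z j →
        DGij h = fderiv ℝ g2 (z i, z j) h - 1 / (2 * Real.pi) := by
    intro i j
    by_cases h : i = j
    · exact ⟨0, fun h' => absurd h h'⟩
    · obtain ⟨DGij, h1, h2⟩ := GDeriv hΩo hG.decomp hG.g_smooth (hzΩ i) (hzΩ j)
        (fun he => h (hzinj he))
      exact ⟨DGij, fun _ => ⟨h1, h2⟩⟩
  choose DG hDG using hpairD
  -- the projections
  set P : Fin N → (Conf N →L[ℝ] ℂ) := fun i => PiLp.proj 2 (fun _ : Fin N => ℂ) i with hPdef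
  set Q : Fin N → Fin N → (Conf N →L[ℝ] ℂ × ℂ) := fun i j => (P i).prod (P j) with hQdef
  -- the total derivative
  set Dtot : Conf N →L[ℝ] ℝ :=
    (∑ j, ((Γ j)^2) • ((fderiv ℝ g2 (z j, z j)).comp (Q j j))) +
      ∑ i, ∑ j, if i = j then 0 else (Γ i * Γ j) • ((DG i j).comp (Q i j)) with hDtotdef
  have hKRH : HasFDerivAt (KRH Γ g G) Dtot z := by
    have h1 : ∀ j : Fin N, j ∈ Finset.univ → HasFDerivAt
        (fun w : Conf N => (Γ j)^2 * g (w j) (w j))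
        (((Γ j)^2) • ((fderiv ℝ g2 (z j, z j)).comp (Q j j))) z := by
      intro j _
      have hg2d : HasFDerivAt g2 (fderiv ℝ g2 (z j, z j)) (z j, z j) :=
        hgdiff (z j, z j) (Set.mk_mem_prod (hzΩ j) (hzΩ j))
      have hproj : HasFDerivAt (fun w : Conf N => ((w j : ℂ), (w j : ℂ))) (Q j j) z :=
        (Q j j).hasFDerivAt
      exact (hg2d.comp z hproj).const_mul _
    have h2 : ∀ i : Fin N, i ∈ Finset.univ → ∀ j : Fin N, j ∈ Finset.univ → HasFDerivAt
        (fun w : Conf N => if i = j then (0:ℝ) else Γ i * Γ j * G (w i) (w j))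
        (if i = j then 0 else (Γ i * Γ j) • ((DG i j).comp (Q i j))) z := by
      intro i _ j _
      by_cases h : i = j
      · simp only [if_pos h]; exact hasFDerivAt_const 0 z
      · simp only [if_neg h]
        have hproj : HasFDerivAt (fun w : Conf N => ((w i : ℂ), (w j : ℂ))) (Q i j) z :=
          (Q i j).hasFDerivAt
        exact (((hDG i j h).1).comp z hproj).const_mul _
    exact (HasFDerivAt.fun_sum h1).fun_add
      (HasFDerivAt.fun_sum (fun i hi => HasFDerivAt.fun_sum (h2 i hi)))
  -- the inner product estimate
  have hCS : |Dtot v| ≤ ‖gradient (KRH Γ g G) z‖ * ρ := by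
    rw [← gradInner hKRH v, ← hvnorm]
    exact abs_real_inner_le_norm _ _
  -- evaluation of Dtot at v
  have hDv : Dtot v = (∑ j, (Γ j)^2 * (fderiv ℝ g2 (z j, z j)) (v j, v j)) +
      ∑ i, ∑ j, if i = j then 0 else Γ i * Γ j * (DG i j) (v i, v j) := by
    rw [hDtotdef, ContinuousLinearMap.add_apply]
    congr 1
    · rw [ContinuousLinearMap.coe_sum', Finset.sum_apply]
      refine Finset.sum_congr rfl fun j _ => ?_
      rw [ContinuousLinearMap.smul_apply, ContinuousLinearMap.comp_apply]
      simp [hQdef, hPdef, smul_eq_mul]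
    · rw [ContinuousLinearMap.coe_sum', Finset.sum_apply]
      refine Finset.sum_congr rfl fun i _ => ?_
      rw [ContinuousLinearMap.coe_sum', Finset.sum_apply]
      refine Finset.sum_congr rfl fun j _ => ?_
      by_cases h : i = j
      · simp [h]
      · simp only [if_neg h, ContinuousLinearMap.smul_apply, ContinuousLinearMap.comp_apply]
        simp [hQdef, hPdef, smul_eq_mul]
  -- the main estimate
  set A : ℝ := ∑ i ∈ C, ∑ j ∈ C, if i = j then 0 else Γ i * Γ j with hAdef
  have hAC : CΓ ≤ |A| := hCΓ C hC.1
  have hA' : ∑ i, ∑ j, (if i ∈ C then (if j ∈ C then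
      (if i = j then (0:ℝ) else Γ i * Γ j) else 0) else 0) = A := by
    rw [hAdef]
    rw [← Finset.sum_subset (Finset.subset_univ C) (fun i _ hiC => by simp [hiC])]
    refine Finset.sum_congr rfl fun i hi => ?_
    simp only [if_pos hi]
    rw [← Finset.sum_subset (Finset.subset_univ C) (fun j _ hjC => by simp [hjC])]
    exact Finset.sum_congr rfl fun j hj => by simp [hj]
  have hmain : |Dtot v + (1 / (2 * Real.pi)) * A| ≤ K * ρ := by
    have hsplit : Dtot v + (1 / (2 * Real.pi)) * A =
        (∑ j, (Γ j)^2 * (fderiv ℝ g2 (z j, z j)) (v j, v j)) +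
        ∑ i, ∑ j, ((if i = j then (0:ℝ) else Γ i * Γ j * (DG i j) (v i, v j)) +
          (1 / (2 * Real.pi)) * (if i ∈ C then (if j ∈ C then
            (if i = j then (0:ℝ) else Γ i * Γ j) else 0) else 0)) := by
      rw [hDv, ← hA', Finset.mul_sum]
      simp_rw [Finset.mul_sum]
      rw [add_assoc, ← Finset.sum_add_distrib]
      exact congrArg _ (Finset.sum_congr rfl fun i _ => (Finset.sum_add_distrib).symm)
    have hb1 : ∀ j : Fin N,
        |(Γ j)^2 * (fderiv ℝ g2 (z j, z j)) (v j, v j)| ≤ (Γ j)^2 * (2*(K₁:ℝ)) * ρ := by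
      intro j
      by_cases hj : j ∈ C
      · have hDgle := hgball _ (hpairball j hj j hj)
        have hvp : ‖((v j : ℂ), (v j : ℂ))‖ ≤ ρ := by
          rw [Prod.norm_def]; exact max_le (hvle j) (hvle j)
        have h1 : |(fderiv ℝ g2 (z j, z j)) (v j, v j)| ≤ (K₁:ℝ) * ρ := by
          rw [← Real.norm_eq_abs]
          calc ‖(fderiv ℝ g2 (z j, z j)) (v j, v j)‖
              ≤ ‖fderiv ℝ g2 (z j, z j)‖ * ‖((v j : ℂ), (v j : ℂ))‖ :=
                ContinuousLinearMap.le_opNorm _ _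
            _ ≤ (K₁:ℝ) * ρ := mul_le_mul hDgle hvp (norm_nonneg _) (NNReal.coe_nonneg K₁)
        rw [abs_mul, _root_.abs_of_nonneg (sq_nonneg (Γ j))]
        calc (Γ j)^2 * |(fderiv ℝ g2 (z j, z j)) (v j, v j)|
            ≤ (Γ j)^2 * ((K₁:ℝ) * ρ) := mul_le_mul_of_nonneg_left h1 (sq_nonneg _)
          _ ≤ (Γ j)^2 * ((2*(K₁:ℝ)) * ρ) := by
              refine mul_le_mul_of_nonneg_left ?_ (sq_nonneg _)
              refine mul_le_mul_of_nonneg_right ?_ hρpos.le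
              have := NNReal.coe_nonneg K₁; linarith
          _ = (Γ j)^2 * (2*(K₁:ℝ)) * ρ := by ring
      · rw [hvnC j hj]
        rw [show ((0:ℂ), (0:ℂ)) = (0 : ℂ × ℂ) from rfl, map_zero, mul_zero, abs_zero]
        positivity
    have hb2 : ∀ i j : Fin N,
        |(if i = j then (0:ℝ) else Γ i * Γ j * (DG i j) (v i, v j)) +
          (1 / (2 * Real.pi)) * (if i ∈ C then (if j ∈ C then
            (if i = j then (0:ℝ) else Γ i * Γ j) else 0) else 0)|
        ≤ |Γ i| * |Γ j| * ((K₁:ℝ) + C₂') * ρ := by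
      intro i j
      have hrhs : (0:ℝ) ≤ |Γ i| * |Γ j| * ((K₁:ℝ) + C₂') * ρ := by positivity
      by_cases hij : i = j
      · simpa [hij] using hrhs
      by_cases hiC : i ∈ C <;> by_cases hjC : j ∈ C
      · -- both in C
        rw [if_neg hij, if_pos hiC, if_pos hjC, if_neg hij]
        have heval := (hDG i j hij).2 (v i, v j)
          (by show v i - v j = z i - z j; rw [hvC i hiC, hvC j hjC]; ring)
        rw [heval]
        have hDgle := hgball _ (hpairball i hiC j hjC)
        have hvp : ‖((v i : ℂ), (v j : ℂ))‖ ≤ ρ := by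
          rw [Prod.norm_def]; exact max_le (hvle i) (hvle j)
        have h1 : |(fderiv ℝ g2 (z i, z j)) (v i, v j)| ≤ (K₁:ℝ) * ρ := by
          rw [← Real.norm_eq_abs]
          calc ‖(fderiv ℝ g2 (z i, z j)) (v i, v j)‖
              ≤ ‖fderiv ℝ g2 (z i, z j)‖ * ‖((v i : ℂ), (v j : ℂ))‖ :=
                ContinuousLinearMap.le_opNorm _ _
            _ ≤ (K₁:ℝ) * ρ := mul_le_mul hDgle hvp (norm_nonneg _) (NNReal.coe_nonneg K₁)
        rw [show Γ i * Γ j * ((fderiv ℝ g2 (z i, z j)) (v i, v j) - 1 / (2 * Real.pi)) +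
            (1 / (2 * Real.pi)) * (Γ i * Γ j)
            = Γ i * Γ j * ((fderiv ℝ g2 (z i, z j)) (v i, v j)) from by ring]
        rw [abs_mul, abs_mul]
        calc |Γ i| * |Γ j| * |(fderiv ℝ g2 (z i, z j)) (v i, v j)|
            ≤ |Γ i| * |Γ j| * ((K₁:ℝ) * ρ) :=
              mul_le_mul_of_nonneg_left h1 (mul_nonneg (abs_nonneg _) (abs_nonneg _))
          _ ≤ |Γ i| * |Γ j| * (((K₁:ℝ) + C₂') * ρ) := by
              refine mul_le_mul_of_nonneg_left ?_ (mul_nonneg (abs_nonneg _) (abs_nonneg _))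
              refine mul_le_mul_of_nonneg_right (by linarith) hρpos.le
          _ = |Γ i| * |Γ j| * ((K₁:ℝ) + C₂') * ρ := by ring
      · -- i ∈ C, j ∉ C
        rw [if_neg hij, if_pos hiC, if_neg hjC, mul_zero, add_zero]
        have hx := (hDG i j hij).1
        have hpart : HasFDerivAt (fun x : ℂ => G x (z j))
            ((DG i j).comp (ContinuousLinearMap.inl ℝ ℂ ℂ)) (z i) :=
          (show HasFDerivAt ((fun q : ℂ × ℂ => G q.1 q.2) ∘ fun e : ℂ => (e, z j)) _ (z i) from
            hx.comp (z i) (hasFDerivAt_prodMk_left (z i) (z j)))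
        have hinner := gradInner hpart (v i)
        have hval : (DG i j) (v i, v j) = ((DG i j).comp (ContinuousLinearMap.inl ℝ ℂ ℂ)) (v i) := by
          rw [hvnC j hjC]; rfl
        have hgradle : ‖gradient (fun x : ℂ => G x (z j)) (z i)‖ ≤ C₂' := by
          have hs := hC₂ (z i) (hzΩ i) (z j) (hzΩ j) (hsep i hiC j hjC)
          have h1 := abs_nonneg (G (z i) (z j))
          have h2 := norm_nonneg (gradient (fun w => G (z i) w) (z j))
          linarith [hC₂le]
        rw [abs_mul, abs_mul]
        have h3 : |(DG i j) (v i, v j)| ≤ C₂' * ρ := by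
          rw [hval, ← hinner, ← Real.norm_eq_abs]
          calc ‖(inner ℝ (gradient (fun x : ℂ => G x (z j)) (z i)) (v i) : ℝ)‖
              ≤ ‖gradient (fun x : ℂ => G x (z j)) (z i)‖ * ‖v i‖ := by
                rw [Real.norm_eq_abs]; exact abs_real_inner_le_norm _ _
            _ ≤ C₂' * ρ := mul_le_mul hgradle (hvle i) (norm_nonneg _) hC₂'nn
        calc |Γ i| * |Γ j| * |(DG i j) (v i, v j)|
            ≤ |Γ i| * |Γ j| * (C₂' * ρ) :=
              mul_le_mul_of_nonneg_left h3 (mul_nonneg (abs_nonneg _) (abs_nonneg _))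
          _ ≤ |Γ i| * |Γ j| * (((K₁:ℝ) + C₂') * ρ) := by
              refine mul_le_mul_of_nonneg_left ?_ (mul_nonneg (abs_nonneg _) (abs_nonneg _))
              refine mul_le_mul_of_nonneg_right ?_ hρpos.le
              have := NNReal.coe_nonneg K₁; linarith
          _ = |Γ i| * |Γ j| * ((K₁:ℝ) + C₂') * ρ := by ring
      · -- i ∉ C, j ∈ C
        rw [if_neg hij, if_neg hiC, mul_zero, add_zero]
        have hx := (hDG i j hij).1
        have hpart : HasFDerivAt (fun y : ℂ => G (z i) y)
            ((DG i j).comp (ContinuousLinearMap.inr ℝ ℂ ℂ)) (z j) :=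
          (show HasFDerivAt ((fun q : ℂ × ℂ => G q.1 q.2) ∘ fun e : ℂ => (z i, e)) _ (z j) from
            hx.comp (z j) (hasFDerivAt_prodMk_right (z i) (z j)))
        have hinner := gradInner hpart (v j)
        have hval : (DG i j) (v i, v j) = ((DG i j).comp (ContinuousLinearMap.inr ℝ ℂ ℂ)) (v j) := by
          rw [hvnC i hiC]; rfl
        have hgradle : ‖gradient (fun y : ℂ => G (z i) y) (z j)‖ ≤ C₂' := by
          have hdist : d₀ / 2 ≤ dist (z i) (z j) := by
            rw [dist_comm]; exact hsep j hjC i hiC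
          have hs := hC₂ (z i) (hzΩ i) (z j) (hzΩ j) hdist
          have h1 := abs_nonneg (G (z i) (z j))
          have h2 := norm_nonneg (gradient (fun w => G w (z j)) (z i))
          linarith [hC₂le]
        rw [abs_mul, abs_mul]
        have h3 : |(DG i j) (v i, v j)| ≤ C₂' * ρ := by
          rw [hval, ← hinner, ← Real.norm_eq_abs]
          calc ‖(inner ℝ (gradient (fun y : ℂ => G (z i) y) (z j)) (v j) : ℝ)‖
              ≤ ‖gradient (fun y : ℂ => G (z i) y) (z j)‖ * ‖v j‖ := by
                rw [Real.norm_eq_abs]; exact abs_real_inner_le_norm _ _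
            _ ≤ C₂' * ρ := mul_le_mul hgradle (hvle j) (norm_nonneg _) hC₂'nn
        calc |Γ i| * |Γ j| * |(DG i j) (v i, v j)|
            ≤ |Γ i| * |Γ j| * (C₂' * ρ) :=
              mul_le_mul_of_nonneg_left h3 (mul_nonneg (abs_nonneg _) (abs_nonneg _))
          _ ≤ |Γ i| * |Γ j| * (((K₁:ℝ) + C₂') * ρ) := by
              refine mul_le_mul_of_nonneg_left ?_ (mul_nonneg (abs_nonneg _) (abs_nonneg _))
              refine mul_le_mul_of_nonneg_right ?_ hρpos.le
              have := NNReal.coe_nonneg K₁; linarith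
          _ = |Γ i| * |Γ j| * ((K₁:ℝ) + C₂') * ρ := by ring
      · -- neither in C
        rw [if_neg hij, if_neg hiC, mul_zero, add_zero]
        rw [hvnC i hiC, hvnC j hjC]
        rw [show ((0:ℂ), (0:ℂ)) = (0 : ℂ × ℂ) from rfl, map_zero, mul_zero, abs_zero]
        exact hrhs
    rw [hsplit]
    have habs : |(∑ j, (Γ j)^2 * (fderiv ℝ g2 (z j, z j)) (v j, v j)) +
        ∑ i, ∑ j, ((if i = j then (0:ℝ) else Γ i * Γ j * (DG i j) (v i, v j)) +
          (1 / (2 * Real.pi)) * (if i ∈ C then (if j ∈ C then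
            (if i = j then (0:ℝ) else Γ i * Γ j) else 0) else 0))|
        ≤ (∑ j, (Γ j)^2 * (2*(K₁:ℝ)) * ρ) +
          ∑ i, ∑ j, |Γ i| * |Γ j| * ((K₁:ℝ) + C₂') * ρ := by
      refine le_trans (abs_add_le _ _) (add_le_add ?_ ?_)
      · exact le_trans (Finset.abs_sum_le_sum_abs _ _) (Finset.sum_le_sum fun j _ => hb1 j)
      · refine le_trans (Finset.abs_sum_le_sum_abs _ _) (Finset.sum_le_sum fun i _ => ?_)
        exact le_trans (Finset.abs_sum_le_sum_abs _ _) (Finset.sum_le_sum fun j _ => hb2 i j)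
    refine le_trans habs ?_
    have he1 : (∑ j, (Γ j)^2 * (2*(K₁:ℝ)) * ρ) = (∑ j, (Γ j)^2) * (2*(K₁:ℝ)) * ρ := by
      rw [Finset.sum_mul, Finset.sum_mul]
    have he2 : (∑ i, ∑ j, |Γ i| * |Γ j| * ((K₁:ℝ) + C₂') * ρ)
        = (∑ i, ∑ j, |Γ i| * |Γ j|) * ((K₁:ℝ) + C₂') * ρ := by
      rw [Finset.sum_mul, Finset.sum_mul]
      refine Finset.sum_congr rfl fun i _ => ?_
      rw [Finset.sum_mul, Finset.sum_mul]
    rw [he1, he2, ← add_mul]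
    refine mul_le_mul_of_nonneg_right ?_ hρpos.le
    rw [hKdef]
    linarith
  -- conclusion
  have hpi : (0:ℝ) < Real.pi := Real.pi_pos
  have hKρ : K * ρ ≤ CΓ / (4*Real.pi) := by
    have h1 : K * ρ ≤ K * (N * δ) := by
      exact mul_le_mul_of_nonneg_left hρδ (le_of_lt hKpos)
    have h2 : K * (N * δ) ≤ CΓ / (4*Real.pi) := by
      have hKN : (0:ℝ) < K * N := by positivity
      calc K * (N * δ) = (K * N) * δ := by ring
        _ ≤ (K * N) * (CΓ / (4*Real.pi) / (K * N)) := by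
            exact mul_le_mul_of_nonneg_left hδK (le_of_lt hKN)
        _ = CΓ / (4*Real.pi) := by field_simp
    exact le_trans h1 h2
  have htri : (1 / (2 * Real.pi)) * |A| ≤ |Dtot v| + K * ρ := by
    have h1 : |(1 / (2 * Real.pi)) * A| ≤ |Dtot v + (1 / (2 * Real.pi)) * A| + |Dtot v| := by
      calc |(1 / (2 * Real.pi)) * A|
          = |(Dtot v + (1 / (2 * Real.pi)) * A) + (-(Dtot v))| := by ring_nf
        _ ≤ |Dtot v + (1 / (2 * Real.pi)) * A| + |(-(Dtot v))| := abs_add_le _ _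
        _ = |Dtot v + (1 / (2 * Real.pi)) * A| + |Dtot v| := by rw [abs_neg]
    rw [abs_mul, abs_of_pos (by positivity : (0:ℝ) < 1 / (2 * Real.pi))] at h1
    linarith
  have hfinal : CΓ / (4*Real.pi) ≤ ‖gradient (KRH Γ g G) z‖ * ρ := by
    have h1 : (1 / (2 * Real.pi)) * CΓ ≤ (1 / (2 * Real.pi)) * |A| :=
      mul_le_mul_of_nonneg_left hAC (by positivity)
    have h2 : (1 / (2 * Real.pi)) * CΓ = CΓ / (4*Real.pi) + CΓ / (4*Real.pi) := by
      field_simp; ring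
    linarith
  rw [div_le_iff₀ hρpos]
  exact hfinal
end
end

section
/- Assume ℂ ∖ cl(Ω) has a bounded connected component Ω₁ with 0 ∈ Ω₁. Then H_Ω is bounded above on S := {z ∈ F_NΩ : z_j/|z_j| = e^{2πij/N} for all j ∈ {1,…,N}}. -/
open Complex Metric Set Filter Topology
open scoped BigOperators Classical ENNReal

noncomputable section

lemma key_geom (δ : ℝ) (hδ : 0 < δ) (z w u v : ℂ)
    (hu : ‖u‖ = 1) (hv : ‖v‖ = 1)
    (hz : δ ≤ ‖z‖) (hw : δ ≤ ‖w‖)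
    (hzu : z / (‖z‖ : ℂ) = u) (hwv : w / (‖w‖ : ℂ) = v) :
    δ * ‖u - v‖ ≤ ‖z - w‖ := by
  set a := ‖z‖ with ha
  set b := ‖w‖ with hb
  have hapos : 0 < a := lt_of_lt_of_le hδ hz
  have hbpos : 0 < b := lt_of_lt_of_le hδ hw
  have hzeq : z = (a : ℂ) * u := by
    have : (a:ℂ) ≠ 0 := by exact_mod_cast hapos.ne'
    rw [← hzu, mul_div_assoc', mul_comm, mul_div_assoc, div_self this, mul_one]
  have hweq : w = (b : ℂ) * v := by
    have : (b:ℂ) ≠ 0 := by exact_mod_cast hbpos.ne'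
    rw [← hwv, mul_div_assoc', mul_comm, mul_div_assoc, div_self this, mul_one]
  have hc1 : |(u * (starRingEnd ℂ) v).re| ≤ 1 := by
    calc |(u * (starRingEnd ℂ) v).re| ≤ ‖u * (starRingEnd ℂ) v‖ :=
          Complex.abs_re_le_norm _
    _ = 1 := by rw [norm_mul, Complex.norm_conj, hu, hv]; ring
  set c := (u * (starRingEnd ℂ) v).re with hcdef
  have hsq : (δ * ‖u - v‖)^2 ≤ (‖z - w‖)^2 := by
    rw [mul_pow, Complex.sq_norm, Complex.sq_norm, Complex.normSq_sub, Complex.normSq_sub]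
    have h1 : Complex.normSq u = 1 := by rw [← Complex.sq_norm, hu]; norm_num
    have h2 : Complex.normSq v = 1 := by rw [← Complex.sq_norm, hv]; norm_num
    have h3 : Complex.normSq z = a^2 := by rw [← Complex.sq_norm]
    have h4 : Complex.normSq w = b^2 := by rw [← Complex.sq_norm]
    have h5 : (z * (starRingEnd ℂ) w).re = a * b * c := by
      rw [hzeq, hweq, hcdef]
      simp only [map_mul, Complex.conj_ofReal]
      have : (a:ℂ) * u * ((b:ℂ) * (starRingEnd ℂ) v)
          = ((a*b : ℝ):ℂ) * (u * (starRingEnd ℂ) v) := by push_cast; ring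
      rw [this, Complex.re_ofReal_mul]
    rw [h1, h2, h3, h4, h5]
    rw [abs_le] at hc1
    nlinarith [sq_nonneg (a - b), mul_nonneg (sub_nonneg.2 hz) (sub_nonneg.2 hw),
      mul_le_mul hz hw (le_of_lt hδ) (le_of_lt hapos)]
  have h0 : (0:ℝ) ≤ δ * ‖u - v‖ := by positivity
  nlinarith [norm_nonneg (z - w),
    sq_nonneg (δ * ‖u - v‖ - ‖z - w‖),
    sq_nonneg (δ * ‖u - v‖ + ‖z - w‖)]

lemma uexp_ne {N : ℕ} (i j : Fin N) (hij : i ≠ j) :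
    Complex.exp (2 * Real.pi * Complex.I * (((i : ℕ) : ℂ) + 1) / (N : ℂ)) ≠
    Complex.exp (2 * Real.pi * Complex.I * (((j : ℕ) : ℂ) + 1) / (N : ℂ)) := by
  have hN : 0 < N := i.pos
  have hNC : (N : ℂ) ≠ 0 := by exact_mod_cast hN.ne'
  have hπ : (Real.pi : ℂ) ≠ 0 := by exact_mod_cast Real.pi_ne_zero
  intro h
  rw [Complex.exp_eq_exp_iff_exists_int] at h
  obtain ⟨n, hn⟩ := h
  have key : ((i : ℕ) : ℂ) = ((j : ℕ) : ℂ) + n * N := by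
    field_simp at hn
    have h2 : (2 * (Real.pi:ℂ) * Complex.I) * (((i : ℕ) : ℂ) + 1) =
        (2 * (Real.pi:ℂ) * Complex.I) * ((((j : ℕ) : ℂ) + 1) + n * N) := by
      linear_combination (2 * (Real.pi:ℂ) * Complex.I) * hn
    have h3 : (2 * (Real.pi:ℂ) * Complex.I) ≠ 0 := by
      simp [hπ, Complex.I_ne_zero]
    have := mul_left_cancel₀ h3 h2
    linear_combination this
  have keyZ : ((i : ℕ) : ℤ) = ((j : ℕ) : ℤ) + n * N := by exact_mod_cast key
  have hi : ((i : ℕ) : ℤ) < N := by exact_mod_cast i.isLt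
  have hj : ((j : ℕ) : ℤ) < N := by exact_mod_cast j.isLt
  have hi0 : (0:ℤ) ≤ ((i : ℕ) : ℤ) := by positivity
  have hj0 : (0:ℤ) ≤ ((j : ℕ) : ℤ) := by positivity
  have hNZ : (0:ℤ) < N := by exact_mod_cast hN
  have hne : ((i : ℕ) : ℤ) ≠ ((j : ℕ) : ℤ) := by
    have : (i:ℕ) ≠ (j:ℕ) := fun h => hij (Fin.ext h)
    exact_mod_cast this
  rcases lt_trichotomy n 0 with hn0 | hn0 | hn0
  · have : n * N ≤ -1 * N := mul_le_mul_of_nonneg_right (by omega) hNZ.le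
    linarith
  · subst hn0; simp at keyZ; omega
  · have : 1 * N ≤ n * N := mul_le_mul_of_nonneg_right (by omega) hNZ.le
    linarith

lemma uexp_abs {N : ℕ} (j : Fin N) :
    ‖Complex.exp (2 * Real.pi * Complex.I * (((j : ℕ) : ℂ) + 1) / (N : ℂ))‖ = 1 := by
  have : (2 * Real.pi * Complex.I * (((j : ℕ) : ℂ) + 1) / (N : ℂ))
      = ((2 * Real.pi * ((j:ℕ) + 1) / N : ℝ) : ℂ) * Complex.I := by
    push_cast; ring
  rw [this, Complex.norm_exp_ofReal_mul_I]

/-- Lemma: `H_Ω` is bounded above on the star-shaped set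
`S = {z ∈ F_N Ω : z_j/|z_j| = e^{2πij/N}}`, when `0` lies in a bounded component of the
complement of `cl Ω`. -/
theorem stmt_16 {N : ℕ} (Ω : Set ℂ)
    (hΩo : IsOpen Ω) (hΩc : IsConnected Ω) (hΩb : Bornology.IsBounded Ω)
    (hextball : ∃ r > (0:ℝ), ∀ x ∈ frontier Ω, ∃ xs : ℂ,
      Metric.ball xs r ⊆ Ωᶜ ∧ dist x xs = r)
    (h0 : (0:ℂ) ∉ closure Ω)
    (hbc : Bornology.IsBounded (connectedComponentIn (closure Ω)ᶜ 0))
    (G g : ℂ → ℂ → ℝ)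
    (hlower : ∃ C₀ : ℝ, ∀ x ∈ Ω, ∀ y ∈ Ω, x ≠ y → C₀ ≤ G x y)
    (hdecomp : ∀ x ∈ Ω, ∀ y ∈ Ω, x ≠ y →
      G x y = g x y - (1 / (2 * Real.pi)) * Real.log (‖x - y‖))
    (hgsmooth : ContDiffOn ℝ 1 (fun q : ℂ × ℂ => g q.1 q.2) (Ω ×ˢ Ω))
    (hupper : ∃ C₁ : ℝ, ∀ x ∈ Ω, ∀ y ∈ Ω, g x y ≤ C₁)
    (Γ : Fin N → ℝ) :
    ∃ B : ℝ, ∀ z ∈ ConfigSp N Ω,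
      (∀ j : Fin N, z j / (‖z j‖ : ℂ) =
        Complex.exp (2 * Real.pi * Complex.I * (((j : ℕ) : ℂ) + 1) / (N : ℂ))) →
      KRH Γ g G z ≤ B := by
  obtain ⟨C₀, hC₀⟩ := hlower
  obtain ⟨C₁, hC₁⟩ := hupper
  -- separation from 0
  obtain ⟨δ, hδpos, hδ⟩ : ∃ δ > (0:ℝ), ∀ y ∈ Ω, δ ≤ ‖y‖ := by
    rw [Metric.mem_closure_iff] at h0
    push_neg at h0
    obtain ⟨δ, hδpos, hδ⟩ := h0
    exact ⟨δ, hδpos, fun y hy => by simpa [Complex.dist_eq] using hδ y hy⟩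
  set u : Fin N → ℂ := fun j =>
    Complex.exp (2 * Real.pi * Complex.I * (((j : ℕ) : ℂ) + 1) / (N : ℂ)) with hu
  refine ⟨∑ j, (Γ j)^2 * C₁ + ∑ i, ∑ j, if i = j then 0 else
    |Γ i * Γ j| * max |C₀|
      |C₁ - (1 / (2 * Real.pi)) * Real.log (δ * ‖u i - u j‖)|, ?_⟩
  rintro z ⟨hmem, hinj⟩ hS
  unfold KRH
  gcongr with j _ i _ j _
  · exact hC₁ _ (hmem j) _ (hmem j)
  · by_cases hij : i = j
    · simp [hij]
    · simp only [if_neg hij]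
      have hzne : z i ≠ z j := fun h => hij (hinj h)
      have huij : u i ≠ u j := uexp_ne i j hij
      have habspos : 0 < δ * ‖u i - u j‖ := by
        have : u i - u j ≠ 0 := sub_ne_zero.2 huij
        exact mul_pos hδpos (norm_pos_iff.2 this)
      have hkey : δ * ‖u i - u j‖ ≤ ‖z i - z j‖ :=
        key_geom δ hδpos (z i) (z j) (u i) (u j) (uexp_abs i) (uexp_abs j)
          (hδ _ (hmem i)) (hδ _ (hmem j)) (hS i) (hS j)
      have hGupper : G (z i) (z j) ≤
          C₁ - (1 / (2 * Real.pi)) * Real.log (δ * ‖u i - u j‖) := by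
        rw [hdecomp _ (hmem i) _ (hmem j) hzne]
        have hlog : Real.log (δ * ‖u i - u j‖)
            ≤ Real.log (‖z i - z j‖) :=
          Real.log_le_log habspos hkey
        have hpos : (0:ℝ) < 1 / (2 * Real.pi) := by positivity
        have := mul_le_mul_of_nonneg_left hlog hpos.le
        have hg := hC₁ _ (hmem i) _ (hmem j)
        linarith
      have hGlower : C₀ ≤ G (z i) (z j) := hC₀ _ (hmem i) _ (hmem j) hzne
      set M := max |C₀|
        |C₁ - (1 / (2 * Real.pi)) * Real.log (δ * ‖u i - u j‖)| with hM
      have hGabs : |G (z i) (z j)| ≤ M := by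
        rw [abs_le]
        constructor
        · have : -M ≤ -|C₀| := neg_le_neg (le_max_left _ _)
          have h2 : -|C₀| ≤ C₀ := neg_abs_le _
          linarith
        · exact hGupper.trans ((le_abs_self _).trans (le_max_right _ _))
      calc Γ i * Γ j * G (z i) (z j) ≤ |Γ i * Γ j * G (z i) (z j)| := le_abs_self _
      _ = |Γ i * Γ j| * |G (z i) (z j)| := abs_mul _ _
      _ ≤ |Γ i * Γ j| * M := mul_le_mul_of_nonneg_left hGabs (abs_nonneg _)
end
end

section
/- For every integer n ≥ 1, the n×n tridiagonal matrix M with entries M_{j,j} = −j for 1 ≤ j ≤ n, M_{j,j−1} = (j−1)/2 for 2 ≤ j ≤ n, M_{j,j+1} = (j+1)/2 for 1 ≤ j ≤ n−1, and all other entries 0, is invertible; equivalently det M ≠ 0 (indeed its kernel is trivial: the first n−1 rows force any kernel vector to have all entries equal, and the last row then forces them to vanish). -/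
open Matrix Finset

/-- The tridiagonal matrix with diagonal `−r`, subdiagonal `(r−1)/2` and superdiagonal
`(r+1)/2` (1-based indexing) has nonzero determinant, hence is invertible. -/
theorem stmt_19 (n : ℕ) (hn : 1 ≤ n) :
    (Matrix.of fun i k : Fin n =>
      if (k : ℕ) + 1 = (i : ℕ) then ((i : ℕ) : ℝ) / 2
      else if (i : ℕ) = (k : ℕ) then -(((i : ℕ) : ℝ) + 1)
      else if (i : ℕ) + 1 = (k : ℕ) then (((i : ℕ) : ℝ) + 2) / 2
      else 0).det ≠ 0 := by
  intro hdet
  obtain ⟨v, hv0, hMv⟩ := (Matrix.exists_mulVec_eq_zero_iff).mpr hdet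
  set w : ℕ → ℝ := fun k => if h : k < n then v ⟨k, h⟩ else 0 with hw
  have hwv : ∀ k : Fin n, w (k : ℕ) = v k := by
    intro k; simp [hw, k.isLt]
  have hwz : ∀ k, n ≤ k → w k = 0 := by
    intro k hk; simp [hw, Nat.not_lt.mpr hk]
  have eqrow : ∀ i : ℕ, i < n →
      ((i : ℝ)/2) * w (i - 1) - ((i : ℝ) + 1) * w i + (((i : ℝ) + 2)/2) * w (i+1) = 0 := by
    intro i hi
    have h0 := congrFun hMv ⟨i, hi⟩
    simp only [Matrix.mulVec, dotProduct, Matrix.of_apply, Pi.zero_apply] at h0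
    set g : ℕ → ℝ := fun k =>
      (if k + 1 = i then (i : ℝ) / 2
      else if i = k then -((i : ℝ) + 1)
      else if i + 1 = k then ((i : ℝ) + 2) / 2
      else 0) * w k with hg
    have hsum : ∑ k ∈ range n, g k = 0 := by
      rw [← Fin.sum_univ_eq_sum_range g n, ← h0]
      refine Finset.sum_congr rfl fun k _ => ?_
      simp only [hg, hwv k]
    have hsplit : ∀ k, g k =
        (if k + 1 = i then (i : ℝ)/2 * w k else 0) +
        ((if k = i then -((i : ℝ) + 1) * w k else 0) +
         (if k = i + 1 then ((i : ℝ) + 2)/2 * w k else 0)) := by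
      intro k
      simp only [hg]
      split_ifs <;> first | (exfalso; omega) | ring1
    rw [Finset.sum_congr rfl (fun k _ => hsplit k), Finset.sum_add_distrib,
      Finset.sum_add_distrib, Finset.sum_ite_eq' (range n) i,
      Finset.sum_ite_eq' (range n) (i+1)] at hsum
    have hA : ∑ k ∈ range n, (if k + 1 = i then (i : ℝ)/2 * w k else 0)
        = (i : ℝ)/2 * w (i - 1) := by
      rcases Nat.eq_zero_or_pos i with rfl | hpos
      · simp
      · have hcond : ∀ k, (k + 1 = i) = (k = i - 1) := by
          intro k; simp only [eq_iff_iff]; omega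
        simp only [hcond]
        rw [Finset.sum_ite_eq' (range n) (i-1)]
        rw [if_pos (Finset.mem_range.mpr (by omega))]
    rw [hA, if_pos (Finset.mem_range.mpr hi)] at hsum
    by_cases h1 : i + 1 < n
    · rw [if_pos (Finset.mem_range.mpr h1)] at hsum
      linarith
    · rw [if_neg (show i + 1 ∉ range n by simp only [Finset.mem_range]; omega)] at hsum
      rw [hwz (i+1) (by omega)]
      linarith
  have key : ∀ i, i < n → w i = w 0 := by
    intro i
    induction i using Nat.strong_induction_on with
    | _ i IH =>
      intro hi
      rcases Nat.eq_zero_or_pos i with rfl | hpos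
      · rfl
      have h1 : i - 1 < n := by omega
      have e := eqrow (i-1) h1
      rw [(by omega : i - 1 + 1 = i)] at e
      rw [IH (i-1) (by omega) (by omega), IH (i-1-1) (by omega) (by omega)] at e
      rw [Nat.cast_sub hpos, Nat.cast_one] at e
      have h2 : ((i : ℝ) + 1) * (w i - w 0) =
          2 * (((i : ℝ) - 1)/2 * w 0 - ((i : ℝ) - 1 + 1) * w 0 + ((i : ℝ) - 1 + 2)/2 * w i) := by
        ring
      rw [e, mul_zero] at h2
      rcases mul_eq_zero.mp h2 with h | h
      · have : (0:ℝ) < (i:ℝ) + 1 := by positivity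
        linarith
      · linarith
  have e := eqrow (n-1) (by omega)
  rw [hwz (n-1+1) (by omega), key (n-1) (by omega), key (n-1-1) (by omega),
    Nat.cast_sub hn, Nat.cast_one] at e
  have h2 : ((n : ℝ) + 1) * w 0 =
      -2 * (((n : ℝ) - 1)/2 * w 0 - ((n : ℝ) - 1 + 1) * w 0 + ((n : ℝ) - 1 + 2)/2 * 0) := by
    ring
  rw [e, mul_zero] at h2
  have hw0 : w 0 = 0 := by
    have : (0:ℝ) < (n:ℝ) + 1 := by positivity
    rcases mul_eq_zero.mp h2 with h | h
    · linarith
    · exact h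
  apply hv0
  funext k
  have := hwv k
  rw [key k k.isLt, hw0] at this
  exact this.symm
end
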